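/- Let n ≥ 3 and let F_n be the free group with basis a_1,…,a_n. Define words W_k recursively by W_0 = a_n and W_{k+1} = W_k a_{k+1} W_k^{−1}. For each j with 1 ≤ j ≤ n−1, the subgroup V_j generated by W_{n−1} a_n W_{n−1}^{−1} together with {a_i : 1 ≤ i ≤ n−1, i ≠ j} is a free factor of F_n of rank n−1, and F_n = V_j ∗ ⟨W_{j−1} a_j W_{j−1}^{−1}⟩ (internal free product). -/

import Mathlib

open Subgroup

/-- The free group of rank `n` with basis indexed by `Fin n`. -/
abbrev FG (n : ℕ) := FreeGroup (Fin n)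

/-- `G` is the internal free product of its subgroups `A` and `B`: the homomorphism
from the abstract free product `A ∗ B` induced by the inclusions is bijective. -/
def IsInternalFreeProduct {G : Type*} [Group G] (A B : Subgroup G) : Prop :=
  Function.Bijective ⇑(Monoid.Coprod.lift A.subtype B.subtype)

/-- A subgroup is a free factor if it has a complementary free factor. -/
def IsFreeFactor {G : Type*} [Group G] (A : Subgroup G) : Prop :=
  ∃ B : Subgroup G, IsInternalFreeProduct A B

/-- A subgroup of a free group has rank `r` if it is isomorphic to the free group of rank `r`. -/
def HasRank {G : Type*} [Group G] (H : Subgroup G) (r : ℕ) : Prop :=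
  Nonempty (H ≃* FreeGroup (Fin r))

/-- The conjugate `w A w⁻¹` of a subgroup `A`. -/
def conjugateBy {G : Type*} [Group G] (w : G) (A : Subgroup G) : Subgroup G :=
  Subgroup.map (MulAut.conj w).toMonoidHom A

/-- Vertices of the free factor graph: proper nontrivial free factors of `F_n`. -/
def FFVertex (n : ℕ) := {A : Subgroup (FG n) // IsFreeFactor A ∧ A ≠ ⊥ ∧ A ≠ ⊤}

/-- The free factor graph `AF_n`: an edge joins `A` and `B` iff `A < B` or `B < A`. -/
def FFGraph (n : ℕ) : SimpleGraph (FFVertex n) where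
  Adj A B := A.val < B.val ∨ B.val < A.val
  symm := ⟨fun _ _ h => h.symm⟩
  loopless := ⟨fun A h => by cases h <;> exact lt_irrefl _ ‹_›⟩

/-- The basis element `a_i` of `F_n` (1-based indexing: `a_i = of ⟨i-1⟩` for `1 ≤ i ≤ n`). -/
def aGen (n : ℕ) (i : ℕ) : FG n :=
  if h : i - 1 < n then FreeGroup.of ⟨i - 1, h⟩ else 1

/-- The words `W_0 = a_n`, `W_{k+1} = W_k a_{k+1} W_k⁻¹`. -/
def Wseq (n : ℕ) : ℕ → FG n
  | 0 => aGen n n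
  | k + 1 => Wseq n k * aGen n (k + 1) * (Wseq n k)⁻¹

/-- The subgroup `V_j` generated by `W_{n-1} a_n W_{n-1}⁻¹` and the `a_i` with
`1 ≤ i ≤ n-1`, `i ≠ j`. -/
def Vfake (n j : ℕ) : Subgroup (FG n) :=
  Subgroup.closure
    ({Wseq n (n - 1) * aGen n n * (Wseq n (n - 1))⁻¹} ∪
      aGen n '' {i : ℕ | 1 ≤ i ∧ i ≤ n - 1 ∧ i ≠ j})

lemma IsInternalFreeProduct.mapEquiv {G H : Type*} [Group G] [Group H] (e : G ≃* H)
    {A B : Subgroup G} (h : IsInternalFreeProduct A B) :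
    IsInternalFreeProduct (A.map e.toMonoidHom) (B.map e.toMonoidHom) := by
  have key : (Monoid.Coprod.lift (A.map e.toMonoidHom).subtype
        (B.map e.toMonoidHom).subtype).comp
      (Monoid.Coprod.map (e.subgroupMap A).toMonoidHom (e.subgroupMap B).toMonoidHom)
      = e.toMonoidHom.comp (Monoid.Coprod.lift A.subtype B.subtype) := by
    apply Monoid.Coprod.hom_ext <;> ext x <;>
      simp [MulEquiv.coe_subgroupMap_apply, Monoid.Coprod.map_apply_inl,
        Monoid.Coprod.map_apply_inr] <;> rfl
  have hco : ⇑(Monoid.Coprod.lift (A.map e.toMonoidHom).subtype (B.map e.toMonoidHom).subtype)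
      ∘ ⇑(MulEquiv.coprodCongr (e.subgroupMap A) (e.subgroupMap B))
      = ⇑e ∘ ⇑(Monoid.Coprod.lift A.subtype B.subtype) := by
    ext x
    exact DFunLike.congr_fun key x
  have hbij : Function.Bijective (⇑(Monoid.Coprod.lift (A.map e.toMonoidHom).subtype
      (B.map e.toMonoidHom).subtype) ∘ ⇑(MulEquiv.coprodCongr (e.subgroupMap A) (e.subgroupMap B))) := by
    rw [hco]; exact e.bijective.comp h
  exact (Function.Bijective.of_comp_iff _ (MulEquiv.coprodCongr _ _).bijective).mp hbij

lemma base_ifp {α : Type*} [DecidableEq α] (j₀ : α) :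
    IsInternalFreeProduct
      (closure (FreeGroup.of '' {i : α | i ≠ j₀}) : Subgroup (FreeGroup α))
      (closure {FreeGroup.of j₀}) := by
  set A : Subgroup (FreeGroup α) := closure (FreeGroup.of '' {i : α | i ≠ j₀}) with hA
  set B : Subgroup (FreeGroup α) := closure {FreeGroup.of j₀} with hB
  let ψ : FreeGroup α →* Monoid.Coprod A B := FreeGroup.lift fun i =>
    if h : i = j₀ then Monoid.Coprod.inr (⟨FreeGroup.of j₀, subset_closure rfl⟩ : B)
    else Monoid.Coprod.inl (⟨FreeGroup.of i, subset_closure ⟨i, h, rfl⟩⟩ : A)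
  have h1 : (Monoid.Coprod.lift A.subtype B.subtype).comp ψ = MonoidHom.id _ := by
    apply FreeGroup.ext_hom; intro a
    by_cases h : a = j₀ <;> simp [ψ, h]
  have hAmem : ∀ x (hx : x ∈ A), ψ x = Monoid.Coprod.inl (⟨x, hx⟩ : A) := by
    intro x hx
    induction hx using closure_induction with
    | mem x hx =>
      obtain ⟨i, hi, rfl⟩ := hx
      simp [ψ, dif_neg hi]
    | one => exact (map_one Monoid.Coprod.inl).symm
    | mul x y hx hy px py =>
      rw [map_mul, px, py, ← map_mul]; rfl
    | inv x hx px =>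
      rw [map_inv, px, ← map_inv]; rfl
  have hBmem : ∀ x (hx : x ∈ B), ψ x = Monoid.Coprod.inr (⟨x, hx⟩ : B) := by
    intro x hx
    induction hx using closure_induction with
    | mem x hx =>
      rcases hx with rfl
      simp [ψ]
    | one => exact (map_one Monoid.Coprod.inr).symm
    | mul x y hx hy px py =>
      rw [map_mul, px, py, ← map_mul]; rfl
    | inv x hx px =>
      rw [map_inv, px, ← map_inv]; rfl
  have h2 : ψ.comp (Monoid.Coprod.lift A.subtype B.subtype) = MonoidHom.id _ := by
    apply Monoid.Coprod.hom_ext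
    · ext x
      simpa using hAmem x.1 x.2
    · ext x
      simpa using hBmem x.1 x.2
  exact Function.bijective_iff_has_inverse.mpr
    ⟨ψ, fun x => DFunLike.congr_fun h2 x, fun x => DFunLike.congr_fun h1 x⟩

noncomputable def closureEquivFree {α : Type*} (S : Set α) :
    (closure (FreeGroup.of '' S) : Subgroup (FreeGroup α)) ≃* FreeGroup S := by
  classical
  let m : FreeGroup S →* FreeGroup α := FreeGroup.lift fun s => FreeGroup.of s.1
  have hrange : m.range = closure (FreeGroup.of '' S) := by
    rw [MonoidHom.range_eq_map, ← FreeGroup.closure_range_of, MonoidHom.map_closure]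
    congr 1
    ext x
    constructor
    · rintro ⟨y, ⟨s, rfl⟩, rfl⟩
      exact ⟨s.1, s.2, by simp [m]⟩
    · rintro ⟨i, hi, rfl⟩
      exact ⟨FreeGroup.of ⟨i, hi⟩, ⟨⟨i, hi⟩, rfl⟩, by simp [m]⟩
  have hinj : Function.Injective m := by
    let r : FreeGroup α →* FreeGroup S := FreeGroup.lift fun i =>
      if h : i ∈ S then FreeGroup.of (⟨i, h⟩ : S) else 1
    have hrm : r.comp m = MonoidHom.id _ := by
      apply FreeGroup.ext_hom; rintro ⟨i, hi⟩
      simp [m, r, dif_pos hi]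
    exact Function.LeftInverse.injective (g := r) fun x => DFunLike.congr_fun hrm x
  exact ((MonoidHom.ofInjective hinj).trans (MulEquiv.subgroupCongr hrange)).symm

/-- auxiliary: iterated conjugation chain starting at `w`, using `a_{s+1}, a_{s+2}, …`. -/
def chain (n : ℕ) (w : FG n) (s : ℕ) : ℕ → FG n
  | 0 => w
  | k + 1 => chain n w s k * aGen n (s + k + 1) * (chain n w s k)⁻¹

lemma chain_succ (n : ℕ) (w : FG n) (s k : ℕ) :
    chain n w s (k + 1) = chain n w s k * aGen n (s + k + 1) * (chain n w s k)⁻¹ := rfl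

lemma Wseq_succ (n k : ℕ) :
    Wseq n (k + 1) = Wseq n k * aGen n (k + 1) * (Wseq n k)⁻¹ := rfl

lemma Wseq_pos (n k : ℕ) (hk : 0 < k) :
    Wseq n k = Wseq n (k - 1) * aGen n k * (Wseq n (k - 1))⁻¹ := by
  obtain ⟨m, rfl⟩ : ∃ m, k = m + 1 := ⟨k - 1, by omega⟩
  simp [Wseq_succ]

lemma aGen_of (n i : ℕ) (h : i - 1 < n) : aGen n i = FreeGroup.of ⟨i - 1, h⟩ := dif_pos h

/-- the target basis map: `a_j ↦ W_j`, `a_n ↦ W_n`, rest fixed. -/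
def ffun (n j : ℕ) : Fin n → FG n := fun i =>
  if (i : ℕ) = j - 1 then Wseq n j
  else if (i : ℕ) = n - 1 then Wseq n n
  else FreeGroup.of i

def Pch (n j : ℕ) : ℕ → FG n := chain n (aGen n j) j

def Aword (n j : ℕ) : FG n := (Pch n j (n - 1 - j))⁻¹ * aGen n n * Pch n j (n - 1 - j)

def Qch (n j : ℕ) : ℕ → FG n := chain n (Aword n j) 0

/-- the inverse basis map. -/
def gfun (n j : ℕ) : Fin n → FG n := fun i =>
  if (i : ℕ) = j - 1 then (Qch n j (j - 1))⁻¹ * aGen n j * Qch n j (j - 1)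
  else if (i : ℕ) = n - 1 then Aword n j
  else FreeGroup.of i

section ctx
variable (n j : ℕ) (hn : 3 ≤ n) (hj1 : 1 ≤ j) (hj2 : j ≤ n - 1)

lemma lift_fix (F : Fin n → FG n)
    (hF : ∀ i : Fin n, (i : ℕ) ≠ j - 1 → (i : ℕ) ≠ n - 1 → F i = FreeGroup.of i)
    (i : ℕ) (h1 : 1 ≤ i) (h2 : i ≤ n - 1) (h3 : i ≠ j) (hj1 : 1 ≤ j) :
    FreeGroup.lift F (aGen n i) = aGen n i := by
  have hlt : i - 1 < n := by omega
  rw [aGen_of n i hlt, FreeGroup.lift_apply_of,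
    hF ⟨i - 1, hlt⟩ (by show i - 1 ≠ j - 1; omega) (by show i - 1 ≠ n - 1; omega)]

lemma gfun_fix : ∀ i : Fin n, (i : ℕ) ≠ j - 1 → (i : ℕ) ≠ n - 1 →
    gfun n j i = FreeGroup.of i := by
  intro i h1 h2; simp [gfun, h1, h2]

lemma ffun_fix : ∀ i : Fin n, (i : ℕ) ≠ j - 1 → (i : ℕ) ≠ n - 1 →
    ffun n j i = FreeGroup.of i := by
  intro i h1 h2; simp [ffun, h1, h2]

include hn hj1 hj2

lemma gamma_W (k : ℕ) (hk : k ≤ j - 1) :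
    FreeGroup.lift (gfun n j) (Wseq n k) = Qch n j k := by
  induction k with
  | zero =>
    have h : n - 1 < n := by omega
    rw [show Wseq n 0 = aGen n n from rfl, aGen_of n n h, FreeGroup.lift_apply_of]
    show gfun n j ⟨n - 1, h⟩ = Qch n j 0
    rw [gfun]
    simp only [show ((⟨n - 1, h⟩ : Fin n) : ℕ) = n - 1 from rfl]
    rw [if_neg (by omega), if_true]
    rfl
  | succ k ih =>
    rw [Wseq_succ, map_mul, map_mul, map_inv, ih (by omega),
      lift_fix n j _ (gfun_fix n j) (k + 1) (by omega) (by omega) (by omega) (by omega),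
      Qch, chain_succ, Nat.zero_add]

lemma gamma_Wj : FreeGroup.lift (gfun n j) (Wseq n j) =
    FreeGroup.of (⟨j - 1, by omega⟩ : Fin n) := by
  have hlt : j - 1 < n := by omega
  rw [Wseq_pos n j (by omega), map_mul, map_mul, map_inv,
    gamma_W n j hn hj1 hj2 (j - 1) le_rfl, aGen_of n j hlt, FreeGroup.lift_apply_of]
  show Qch n j (j - 1) * gfun n j ⟨j - 1, hlt⟩ * (Qch n j (j - 1))⁻¹ = _
  rw [gfun]
  simp only [show ((⟨j - 1, hlt⟩ : Fin n) : ℕ) = j - 1 from rfl, if_true]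
  rw [aGen_of n j hlt]
  group

lemma gamma_P (m : ℕ) (hm : j + m ≤ n - 1) :
    FreeGroup.lift (gfun n j) (Wseq n (j + m)) = Pch n j m := by
  induction m with
  | zero =>
    have hlt : j - 1 < n := by omega
    rw [show j + 0 = j from rfl, gamma_Wj n j hn hj1 hj2]
    show _ = aGen n j
    rw [aGen_of n j hlt]
  | succ m ih =>
    rw [show j + (m + 1) = (j + m) + 1 from rfl, Wseq_succ, map_mul, map_mul, map_inv,
      ih (by omega),
      lift_fix n j _ (gfun_fix n j) (j + m + 1) (by omega) (by omega) (by omega) (by omega),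
      Pch, chain_succ]

lemma gamma_Wn : FreeGroup.lift (gfun n j) (Wseq n n) =
    FreeGroup.of (⟨n - 1, by omega⟩ : Fin n) := by
  have hlt : n - 1 < n := by omega
  have hP := gamma_P n j hn hj1 hj2 (n - 1 - j) (by omega)
  rw [show j + (n - 1 - j) = n - 1 from by omega] at hP
  rw [Wseq_pos n n (by omega), map_mul, map_mul, map_inv, hP, aGen_of n n hlt,
    FreeGroup.lift_apply_of]
  show Pch n j (n - 1 - j) * gfun n j ⟨n - 1, hlt⟩ * (Pch n j (n - 1 - j))⁻¹ = _
  rw [gfun]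
  simp only [show ((⟨n - 1, hlt⟩ : Fin n) : ℕ) = n - 1 from rfl]
  rw [if_neg (by omega), if_true, Aword, aGen_of n n hlt]
  group

lemma phi_P (m : ℕ) (hm : j + m ≤ n - 1) :
    FreeGroup.lift (ffun n j) (Pch n j m) = Wseq n (j + m) := by
  induction m with
  | zero =>
    have hlt : j - 1 < n := by omega
    show FreeGroup.lift (ffun n j) (aGen n j) = Wseq n j
    rw [aGen_of n j hlt, FreeGroup.lift_apply_of]
    show ffun n j ⟨j - 1, hlt⟩ = _
    rw [ffun]
    simp only [show ((⟨j - 1, hlt⟩ : Fin n) : ℕ) = j - 1 from rfl, if_true]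
  | succ m ih =>
    rw [Pch, chain_succ, map_mul, map_mul, map_inv, ← Pch, ih (by omega),
      lift_fix n j _ (ffun_fix n j) (j + m + 1) (by omega) (by omega) (by omega) (by omega),
      show j + (m + 1) = (j + m) + 1 from rfl, Wseq_succ]

lemma phi_A : FreeGroup.lift (ffun n j) (Aword n j) = aGen n n := by
  have hlt : n - 1 < n := by omega
  have hP := phi_P n j hn hj1 hj2 (n - 1 - j) (by omega)
  rw [show j + (n - 1 - j) = n - 1 from by omega] at hP
  rw [Aword, map_mul, map_mul, map_inv, hP, aGen_of n n hlt, FreeGroup.lift_apply_of]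
  show _ * ffun n j ⟨n - 1, hlt⟩ * _ = _
  rw [ffun]
  simp only [show ((⟨n - 1, hlt⟩ : Fin n) : ℕ) = n - 1 from rfl]
  rw [if_neg (by omega), if_true, Wseq_pos n n (by omega), aGen_of n n hlt]
  group

lemma phi_Q (k : ℕ) (hk : k ≤ j - 1) :
    FreeGroup.lift (ffun n j) (Qch n j k) = Wseq n k := by
  induction k with
  | zero => exact phi_A n j hn hj1 hj2
  | succ k ih =>
    rw [Qch, chain_succ, Nat.zero_add, map_mul, map_mul, map_inv, ← Qch, ih (by omega),
      lift_fix n j _ (ffun_fix n j) (k + 1) (by omega) (by omega) (by omega) (by omega), Wseq_succ]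

lemma phi_gj : FreeGroup.lift (ffun n j) (gfun n j ⟨j - 1, by omega⟩) =
    FreeGroup.of (⟨j - 1, by omega⟩ : Fin n) := by
  have hlt : j - 1 < n := by omega
  rw [gfun]
  simp only [show ((⟨j - 1, hlt⟩ : Fin n) : ℕ) = j - 1 from rfl, if_true]
  rw [map_mul, map_mul, map_inv, phi_Q n j hn hj1 hj2 (j - 1) le_rfl, aGen_of n j hlt,
    FreeGroup.lift_apply_of]
  show _ * ffun n j ⟨j - 1, hlt⟩ * _ = _
  rw [ffun]
  simp only [show ((⟨j - 1, hlt⟩ : Fin n) : ℕ) = j - 1 from rfl, if_true]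
  rw [Wseq_pos n j (by omega), aGen_of n j hlt]
  group

/-- The automorphism of `F_n` carrying the standard basis to the twisted one. -/
noncomputable def autE : FG n ≃* FG n :=
  MonoidHom.toMulEquiv (FreeGroup.lift (ffun n j)) (FreeGroup.lift (gfun n j))
    (by
      apply FreeGroup.ext_hom; intro i
      simp only [MonoidHom.comp_apply, MonoidHom.id_apply, FreeGroup.lift_apply_of]
      by_cases h1 : (i : ℕ) = j - 1
      · have : i = (⟨j - 1, by omega⟩ : Fin n) := by
          apply Fin.ext; exact h1
        rw [ffun, if_pos h1, gamma_Wj n j hn hj1 hj2, this]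
      · by_cases h2 : (i : ℕ) = n - 1
        · have : i = (⟨n - 1, by omega⟩ : Fin n) := by apply Fin.ext; exact h2
          rw [ffun, if_neg h1, if_pos h2, gamma_Wn n j hn hj1 hj2, this]
        · rw [ffun_fix n j i h1 h2, FreeGroup.lift_apply_of, gfun_fix n j i h1 h2])
    (by
      apply FreeGroup.ext_hom; intro i
      simp only [MonoidHom.comp_apply, MonoidHom.id_apply, FreeGroup.lift_apply_of]
      by_cases h1 : (i : ℕ) = j - 1
      · have hi : i = (⟨j - 1, by omega⟩ : Fin n) := by apply Fin.ext; exact h1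
        rw [hi]
        exact phi_gj n j hn hj1 hj2
      · by_cases h2 : (i : ℕ) = n - 1
        · have hi : i = (⟨n - 1, by omega⟩ : Fin n) := by apply Fin.ext; exact h2
          rw [gfun, if_neg h1, if_pos h2, phi_A n j hn hj1 hj2, hi,
            aGen_of n n (by omega : n - 1 < n)]
        · rw [gfun_fix n j i h1 h2, FreeGroup.lift_apply_of, ffun_fix n j i h1 h2])

end ctx

/-- For `1 ≤ j ≤ n-1`, the subgroup `V_j` is a free factor of `F_n` of rank `n-1`,
and `F_n = V_j ∗ ⟨W_{j-1} a_j W_{j-1}⁻¹⟩`. -/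
theorem fake_apartment_factors (n : ℕ) (hn : 3 ≤ n) (j : ℕ) (hj1 : 1 ≤ j)
    (hj2 : j ≤ n - 1) :
    IsFreeFactor (Vfake n j) ∧ HasRank (Vfake n j) (n - 1) ∧
      IsInternalFreeProduct (Vfake n j)
        (Subgroup.closure {Wseq n (j - 1) * aGen n j * (Wseq n (j - 1))⁻¹}) := by
  classical
  have hjn : j - 1 < n := by omega
  have hln : n - 1 < n := by omega
  set j₀ : Fin n := ⟨j - 1, hjn⟩ with hj₀
  set e : FG n ≃* FG n := autE n j hn hj1 hj2 with he
  have hEof : ∀ i : Fin n, e.toMonoidHom (FreeGroup.of i) = ffun n j i := fun i =>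
    FreeGroup.lift_apply_of
  have hWn : Wseq n n = Wseq n (n - 1) * aGen n n * (Wseq n (n - 1))⁻¹ :=
    Wseq_pos n n (by omega)
  have hWj : Wseq n j = Wseq n (j - 1) * aGen n j * (Wseq n (j - 1))⁻¹ :=
    Wseq_pos n j (by omega)
  have haof : ∀ (b : ℕ) (hb : b - 1 < n), aGen n b = FreeGroup.of ⟨b - 1, hb⟩ :=
    fun b hb => aGen_of n b hb
  have hmapV : Subgroup.map e.toMonoidHom
      (closure (FreeGroup.of '' {i : Fin n | i ≠ j₀})) = Vfake n j := by
    rw [MonoidHom.map_closure, Vfake]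
    congr 1
    ext x
    simp only [Set.mem_image, Set.mem_setOf_eq, Set.mem_union, Set.mem_singleton_iff]
    constructor
    · rintro ⟨-, ⟨i, hi, rfl⟩, rfl⟩
      have hi' : (i : ℕ) ≠ j - 1 := fun h => hi (Fin.ext h)
      rw [hEof]
      by_cases hiN : (i : ℕ) = n - 1
      · left
        rw [ffun, if_neg hi', if_pos hiN, hWn]
      · right
        refine ⟨(i : ℕ) + 1, ⟨by omega, by omega, by omega⟩, ?_⟩
        rw [ffun, if_neg hi', if_neg hiN, haof ((i : ℕ) + 1) (by omega)]
        exact congrArg FreeGroup.of (Fin.ext (by simp))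
    · rintro (rfl | ⟨b, ⟨hb1, hb2, hb3⟩, rfl⟩)
      · refine ⟨FreeGroup.of ⟨n - 1, hln⟩, ⟨⟨n - 1, hln⟩, ?_, rfl⟩, ?_⟩
        · intro h
          have h' : n - 1 = j - 1 := congrArg Fin.val h
          omega
        · rw [hEof, ffun]
          simp only [show ((⟨n - 1, hln⟩ : Fin n) : ℕ) = n - 1 from rfl]
          rw [if_neg (by omega), if_true, hWn]
      · have hb : b - 1 < n := by omega
        refine ⟨FreeGroup.of ⟨b - 1, hb⟩, ⟨⟨b - 1, hb⟩, ?_, rfl⟩, ?_⟩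
        · intro h
          have h' : b - 1 = j - 1 := congrArg Fin.val h
          omega
        · rw [hEof, ffun]
          simp only [show ((⟨b - 1, hb⟩ : Fin n) : ℕ) = b - 1 from rfl]
          rw [if_neg (by omega), if_neg (by omega), haof b (by omega)]
  have hmapB : Subgroup.map e.toMonoidHom (closure {FreeGroup.of j₀}) =
      closure {Wseq n (j - 1) * aGen n j * (Wseq n (j - 1))⁻¹} := by
    rw [MonoidHom.map_closure, Set.image_singleton, hEof, ffun]
    simp only [show ((j₀ : Fin n) : ℕ) = j - 1 from rfl, if_true]
    rw [← hWj]
  have hifp := (base_ifp j₀).mapEquiv e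
  rw [hmapV, hmapB] at hifp
  refine ⟨⟨_, hifp⟩, ?_, hifp⟩
  -- rank
  haveI : Fintype ↥{i : Fin n | i ≠ j₀} := Fintype.ofFinite _
  have hcard : Fintype.card ↥{i : Fin n | i ≠ j₀} = n - 1 := by
    have h1 : Fintype.card {i : Fin n // ¬ i = j₀} = n - 1 := by
      rw [Fintype.card_subtype_compl, Fintype.card_subtype_eq, Fintype.card_fin]
    rw [← h1]
    exact Fintype.card_congr (Equiv.refl _)
  have hfin : ↥{i : Fin n | i ≠ j₀} ≃ Fin (n - 1) := Fintype.equivFinOfCardEq hcard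
  exact ⟨(MulEquiv.subgroupCongr hmapV.symm).trans
    (((e.subgroupMap _).symm).trans
      ((closureEquivFree _).trans (FreeGroup.freeGroupCongr hfin)))⟩
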